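/- Under the standing assumptions, for each θ ≥ 0 the identity ∫_0^θ (h'/(hλ + h' + δ))(y(x)) dx = (h·(hλ + δ))/(δ·(hλ + h' + δ)) evaluated at y(θ) holds, where y : [0,∞) → (y_∞, y₀] is the inverse of the free boundary θ(·) defined by θ'(y) = 1 + hλ/δ - h h''/(δ h') + h (hλ+h'+δ)'/(δ(hλ+h'+δ)) with θ(y₀)=0. -/

import Mathlib

open Real intervalIntegral

private lemma stmt8_alg (a b c d e q : ℝ) (hd : d ≠ 0) (he : e ≠ 0)
    (hP : a * b + e + d ≠ 0) :
    ((e * (a * b + d) + a * q) * (d * (a * b + e + d))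
        - a * (a * b + d) * (d * (q + c))) / (d * (a * b + e + d)) ^ 2
      = e / (a * b + e + d)
          * (1 + a * b / d - a * c / (d * e) + a * (q + c) / (d * (a * b + e + d))) := by
  field_simp
  ring

theorem stmt8 (h lam : ℝ → ℝ) (δ y₀ yInf : ℝ)
    (hC2 : ContDiff ℝ 2 h) (hh0 : h 0 = 0)
    (hh' : ∀ y, 0 < deriv h y)
    (hh'' : ∀ y, 0 ≤ deriv (deriv h) y)
    (hlamC1 : ContDiff ℝ 1 lam) (hlampos : ∀ y, 0 < lam y)
    (hhlam' : ∀ y, 0 < deriv (fun z => h z * lam z) y)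
    (hδ : 0 < δ)
    (hy₀lt : y₀ < 0) (hyInflt : yInf < y₀)
    (hy₀ : h y₀ * lam y₀ + δ = 0)
    (hyInf : h yInf * lam yInf + deriv h yInf + δ = 0)
    (θfun yb : ℝ → ℝ)
    (hθ0 : θfun y₀ = 0)
    (hθ' : ∀ y ∈ Set.Ioc yInf y₀, HasDerivAt θfun
      (1 + h y * lam y / δ - h y * deriv (deriv h) y / (δ * deriv h y)
        + h y * deriv (fun z => h z * lam z + deriv h z + δ) y
            / (δ * (h y * lam y + deriv h y + δ))) y)
    (hyb_mem : ∀ t ≥ (0:ℝ), yb t ∈ Set.Ioc yInf y₀)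
    (hyb_inv : ∀ t ≥ (0:ℝ), θfun (yb t) = t) :
    ∀ θ ≥ (0:ℝ),
      (∫ x in (0:ℝ)..θ,
          deriv h (yb x) / (h (yb x) * lam (yb x) + deriv h (yb x) + δ))
        = h (yb θ) * (h (yb θ) * lam (yb θ) + δ)
            / (δ * (h (yb θ) * lam (yb θ) + deriv h (yb θ) + δ)) := by
  intro θ hθ
  -- basic differentiability facts
  have hdh1 : ContDiff ℝ 1 (deriv h) := by
    have : ContDiff ℝ ((1:ℕ) + 1) h := by exact_mod_cast hC2
    exact (contDiff_succ_iff_deriv.mp this).2.2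
  have hdiffh : Differentiable ℝ h := hC2.differentiable (by norm_num)
  have hdifflam : Differentiable ℝ lam := hlamC1.differentiable (by norm_num)
  have hdiffdh : Differentiable ℝ (deriv h) := hdh1.differentiable (by norm_num)
  have hmul : Differentiable ℝ (fun z => h z * lam z) := hdiffh.mul hdifflam
  -- notation
  set e : ℝ → ℝ := deriv h with he_def
  set Q : ℝ → ℝ := fun y => h y * lam y + δ with hQ_def
  set P : ℝ → ℝ := fun y => h y * lam y + deriv h y + δ with hP_def
  have hQder : ∀ y, HasDerivAt Q (deriv (fun z => h z * lam z) y) y := fun y =>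
    ((hmul y).hasDerivAt).add_const δ
  have hPder : ∀ y, HasDerivAt P
      (deriv (fun z => h z * lam z) y + deriv (deriv h) y) y := fun y =>
    (((hmul y).hasDerivAt).add ((hdiffdh y).hasDerivAt)).add_const δ
  have hPderiv_eq : ∀ y, deriv (fun z => h z * lam z + deriv h z + δ) y
      = deriv (fun z => h z * lam z) y + deriv (deriv h) y := fun y => (hPder y).deriv
  -- monotonicity and signs
  have hmonoh : StrictMono h := strictMono_of_deriv_pos hh'
  have hQmono : StrictMono Q := by
    apply strictMono_of_deriv_pos
    intro y
    rw [(hQder y).deriv]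
    exact hhlam' y
  have hPmono : StrictMono P := by
    apply strictMono_of_deriv_pos
    intro y
    rw [(hPder y).deriv]
    exact add_pos_of_pos_of_nonneg (hhlam' y) (hh'' y)
  have hPyInf : P yInf = 0 := hyInf
  have hQy₀ : Q y₀ = 0 := hy₀
  have hPpos : ∀ y, yInf < y → 0 < P y := fun y hy => hPyInf ▸ hPmono hy
  have hQnp : ∀ y, y ≤ y₀ → Q y ≤ 0 := fun y hy => hQy₀ ▸ hQmono.monotone hy
  have hhneg : ∀ y, y ≤ y₀ → h y < 0 := fun y hy => by
    have : h y ≤ h y₀ := hmonoh.monotone hy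
    have : h y₀ < h 0 := hmonoh hy₀lt
    linarith [hmonoh.monotone hy, hh0 ▸ this]
  -- the functions F (the RHS) and its derivative F', and the slope T of θfun
  set F : ℝ → ℝ := fun y => h y * Q y / (δ * P y) with hF_def
  set F' : ℝ → ℝ := fun y =>
    ((e y * Q y + h y * deriv (fun z => h z * lam z) y) * (δ * P y)
        - h y * Q y * (δ * (deriv (fun z => h z * lam z) y + deriv (deriv h) y)))
      / (δ * P y) ^ 2 with hF'_def
  set T : ℝ → ℝ := fun y =>
    1 + h y * lam y / δ - h y * deriv (deriv h) y / (δ * e y)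
      + h y * (deriv (fun z => h z * lam z) y + deriv (deriv h) y) / (δ * P y) with hT_def
  have hθT : ∀ y ∈ Set.Ioc yInf y₀, HasDerivAt θfun (T y) y := by
    intro y hy
    have := hθ' y hy
    rw [hPderiv_eq y] at this
    exact this
  have hδP : ∀ y, yInf < y → δ * P y ≠ 0 := fun y hy =>
    (mul_pos hδ (hPpos y hy)).ne'
  have hFder : ∀ y, yInf < y → HasDerivAt F (F' y) y := by
    intro y hy
    exact (((hdiffh y).hasDerivAt.mul (hQder y)).div ((hPder y).const_mul δ) (hδP y hy))
  -- the algebraic identity F' = (e/P) * T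
  have halg : ∀ y ∈ Set.Ioc yInf y₀, F' y = e y / P y * T y := by
    intro y hy
    have := stmt8_alg (h y) (lam y) (deriv (deriv h) y) δ (e y)
      (deriv (fun z => h z * lam z) y) hδ.ne' (hh' y).ne'
      (by simpa [hP_def] using (hPpos y hy.1).ne')
    simpa [hF'_def, hT_def, hQ_def, hP_def, mul_comm, mul_assoc, mul_left_comm] using this
  -- signs of F' and T
  have hF'neg : ∀ y ∈ Set.Ioc yInf y₀, F' y < 0 := by
    intro y hy
    have h1 : 0 < P y := hPpos y hy.1
    have h2 : Q y ≤ 0 := hQnp y hy.2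
    have h3 : h y < 0 := hhneg y hy.2
    have h4 : 0 < e y := hh' y
    have h5 : 0 < deriv (fun z => h z * lam z) y := hhlam' y
    have h6 : 0 ≤ deriv (deriv h) y := hh'' y
    have hA : e y * Q y * (δ * P y) ≤ 0 :=
      mul_nonpos_of_nonpos_of_nonneg (mul_nonpos_of_nonneg_of_nonpos h4.le h2)
        (mul_pos hδ h1).le
    have hB : h y * deriv (fun z => h z * lam z) y * (δ * P y) < 0 :=
      mul_neg_of_neg_of_pos (mul_neg_of_neg_of_pos h3 h5) (mul_pos hδ h1)
    have hC : 0 ≤ h y * Q y * (δ * (deriv (fun z => h z * lam z) y + deriv (deriv h) y)) :=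
      mul_nonneg (by nlinarith)
        (mul_nonneg hδ.le (by linarith))
    have hnum : (e y * Q y + h y * deriv (fun z => h z * lam z) y) * (δ * P y)
        - h y * Q y * (δ * (deriv (fun z => h z * lam z) y + deriv (deriv h) y)) < 0 := by
      nlinarith [hA, hB, hC]
    have hden : 0 < (δ * P y) ^ 2 := by positivity
    exact div_neg_of_neg_of_pos hnum hden
  have hTneg : ∀ y ∈ Set.Ioc yInf y₀, T y < 0 := by
    intro y hy
    have h1 := halg y hy
    have h2 := hF'neg y hy
    have h3 : 0 < e y / P y := div_pos (hh' y) (hPpos y hy.1)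
    by_contra hcon
    push_neg at hcon
    have : 0 ≤ F' y := h1 ▸ mul_nonneg h3.le hcon
    linarith
  -- θfun is strictly antitone on Ioc yInf y₀
  have hanti : StrictAntiOn θfun (Set.Ioc yInf y₀) := by
    apply strictAntiOn_of_deriv_neg (convex_Ioc _ _)
    · exact fun x hx => (hθT x hx).continuousAt.continuousWithinAt
    · intro x hx
      rw [interior_Ioc] at hx
      have hx' : x ∈ Set.Ioc yInf y₀ := ⟨hx.1, hx.2.le⟩
      rw [(hθT x hx').deriv]
      exact hTneg x hx'
  have hy₀mem : y₀ ∈ Set.Ioc yInf y₀ := ⟨hyInflt, le_rfl⟩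
  have hyb0 : yb 0 = y₀ := by
    apply hanti.injOn (hyb_mem 0 le_rfl) hy₀mem
    rw [hyb_inv 0 le_rfl, hθ0]
  have hθnonneg : ∀ b ∈ Set.Ioc yInf y₀, 0 ≤ θfun b := by
    intro b hb
    rcases eq_or_lt_of_le hb.2 with hbe | hbl
    · rw [hbe, hθ0]
    · have := hanti hb hy₀mem hbl
      rw [hθ0] at this
      exact this.le
  -- continuity of yb
  have hybcontAt : ∀ t : ℝ, 0 < t → ContinuousAt yb t := by
    intro t ht
    have hc := hyb_mem t ht.le
    set c := yb t with hc_def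
    have hcy₀ : c < y₀ := by
      rcases eq_or_lt_of_le hc.2 with hce | hcl
      · exfalso
        have : θfun c = t := hyb_inv t ht.le
        rw [hce, hθ0] at this
        linarith
      · exact hcl
    rw [Metric.continuousAt_iff]
    intro ε hε
    set a := max (c - ε) ((yInf + c) / 2) with ha_def
    set b := min (c + ε) ((c + y₀) / 2) with hb_def
    have hac : a < c := by
      apply max_lt <;> [linarith; linarith [hc.1]]
    have haInf : yInf < a := lt_of_lt_of_le (by linarith [hc.1]) (le_max_right _ _)
    have hamem : a ∈ Set.Ioc yInf y₀ := ⟨haInf, by linarith⟩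
    have hcb : c < b := by
      apply lt_min <;> [linarith; linarith]
    have hby₀ : b ≤ y₀ := le_trans (min_le_right _ _) (by linarith)
    have hbmem : b ∈ Set.Ioc yInf y₀ := ⟨by linarith [hc.1], hby₀⟩
    have hta : t < θfun a := by
      have := hanti hamem hc hac
      rwa [hyb_inv t ht.le] at this
    have htb : θfun b < t := by
      have := hanti hc hbmem hcb
      rwa [hyb_inv t ht.le] at this
    refine ⟨min (θfun a - t) (t - θfun b), lt_min (by linarith) (by linarith), fun s hs => ?_⟩
    rw [Real.dist_eq] at hs
    have hs1 : s < θfun a := by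
      have := abs_lt.mp (lt_of_lt_of_le hs (min_le_left _ _))
      linarith [this.2]
    have hs2 : θfun b < s := by
      have := abs_lt.mp (lt_of_lt_of_le hs (min_le_right _ _))
      linarith [this.1]
    have hs0 : 0 ≤ s := le_trans (hθnonneg b hbmem) hs2.le
    have hsmem := hyb_mem s hs0
    have hsinv := hyb_inv s hs0
    have h₁ : a < yb s := by
      by_contra hcon
      push_neg at hcon
      rcases eq_or_lt_of_le hcon with hce | hcl
      · have : s = θfun a := by rw [← hsinv, hce]
        linarith
      · have := hanti hsmem hamem hcl
        rw [hsinv] at this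
        linarith
    have h₂ : yb s < b := by
      by_contra hcon
      push_neg at hcon
      rcases eq_or_lt_of_le hcon with hce | hcl
      · have : s = θfun b := by rw [← hsinv, ← hce]
        linarith
      · have := hanti hbmem hsmem hcl
        rw [hsinv] at this
        linarith
    rw [Real.dist_eq, abs_lt]
    constructor
    · have : c - ε ≤ a := le_max_left _ _
      linarith
    · have : b ≤ c + ε := min_le_left _ _
      linarith
  have hybcw0 : ContinuousWithinAt yb (Set.Ici 0) 0 := by
    rw [Metric.continuousWithinAt_iff]
    intro ε hε
    set a := max (y₀ - ε) ((yInf + y₀) / 2) with ha_def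
    have hac : a < y₀ := by apply max_lt <;> [linarith; linarith]
    have haInf : yInf < a := lt_of_lt_of_le (by linarith) (le_max_right _ _)
    have hamem : a ∈ Set.Ioc yInf y₀ := ⟨haInf, hac.le⟩
    have hta : 0 < θfun a := by
      have := hanti hamem hy₀mem hac
      rwa [hθ0] at this
    refine ⟨θfun a, hta, fun s hs hdist => ?_⟩
    have hs0 : (0:ℝ) ≤ s := hs
    rw [Real.dist_eq, sub_zero] at hdist
    have hs1 : s < θfun a := lt_of_le_of_lt (le_abs_self s) hdist
    have hsmem := hyb_mem s hs0
    have hsinv := hyb_inv s hs0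
    have h₁ : a < yb s := by
      by_contra hcon
      push_neg at hcon
      rcases eq_or_lt_of_le hcon with hce | hcl
      · have : s = θfun a := by rw [← hsinv, hce]
        linarith
      · have := hanti hsmem hamem hcl
        rw [hsinv] at this
        linarith
    rw [Real.dist_eq, hyb0, abs_lt]
    constructor
    · have : y₀ - ε ≤ a := le_max_left _ _
      linarith
    · linarith [hsmem.2, hε]
  have hybcont : ContinuousOn yb (Set.Ici 0) := by
    intro s hs
    rcases eq_or_lt_of_le (Set.mem_Ici.mp hs : (0:ℝ) ≤ s) with hse | hsl
    · rw [← hse]; exact hybcw0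
    · exact (hybcontAt s hsl).continuousWithinAt
  -- G = F ∘ yb and its derivative
  set G : ℝ → ℝ := fun s => F (yb s) with hG_def
  have hGder : ∀ s ∈ Set.Ioo 0 θ, HasDerivAt G (e (yb s) / P (yb s)) s := by
    intro s hs
    have hs0 : (0:ℝ) < s := hs.1
    have hmem := hyb_mem s hs0.le
    have hTe : T (yb s) ≠ 0 := (hTneg _ hmem).ne
    have hinv : ∀ᶠ u in nhds s, θfun (yb u) = u := by
      filter_upwards [isOpen_Ioi.mem_nhds (hs0 : s ∈ Set.Ioi 0)] with u hu
      exact hyb_inv u (le_of_lt hu)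
    have hybder : HasDerivAt yb (T (yb s))⁻¹ s :=
      HasDerivAt.of_local_left_inverse (hybcontAt s hs0) (hθT _ hmem) hTe hinv
    have hFd : HasDerivAt F (F' (yb s)) (yb s) := hFder _ hmem.1
    have := hFd.comp s hybder
    have hval : F' (yb s) * (T (yb s))⁻¹ = e (yb s) / P (yb s) := by
      rw [halg _ hmem, mul_assoc, mul_inv_cancel₀ hTe, mul_one]
    rwa [hval] at this
  have hGcont : ContinuousOn G (Set.Icc 0 θ) := by
    intro s hs
    have hmem := hyb_mem s hs.1
    exact ((hFder _ hmem.1).continuousAt).comp_continuousWithinAt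
      ((hybcont s hs.1).mono (fun u hu => hu.1))
  -- integrability of the integrand
  have hPcont : Continuous P := by
    have : Continuous fun y => h y * lam y := hdiffh.continuous.mul hdifflam.continuous
    exact (this.add hdiffdh.continuous).add continuous_const
  have hintgrand : ContinuousOn (fun x => e (yb x) / P (yb x)) (Set.Icc 0 θ) := by
    apply ContinuousOn.div
    · exact hdiffdh.continuous.comp_continuousOn (hybcont.mono (fun u hu => hu.1))
    · exact hPcont.comp_continuousOn (hybcont.mono (fun u hu => hu.1))
    · intro x hx
      exact (hPpos _ (hyb_mem x hx.1).1).ne'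
  have hint : IntervalIntegrable (fun x => e (yb x) / P (yb x)) MeasureTheory.volume 0 θ := by
    rw [intervalIntegrable_iff_integrableOn_Icc_of_le hθ]
    exact hintgrand.integrableOn_compact isCompact_Icc
  -- FTC
  have hFTC : (∫ x in (0:ℝ)..θ, e (yb x) / P (yb x)) = G θ - G 0 :=
    intervalIntegral.integral_eq_sub_of_hasDeriv_right_of_le hθ hGcont
      (fun x hx => (hGder x hx).hasDerivWithinAt) hint
  have hG0 : G 0 = 0 := by
    simp only [hG_def, hF_def, hyb0, hQy₀, mul_zero, zero_div]
  have hfinal : (∫ x in (0:ℝ)..θ, e (yb x) / P (yb x)) = F (yb θ) := by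
    rw [hFTC, hG0, sub_zero]
  simpa [hF_def, hQ_def, hP_def, he_def] using hfinal
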